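/- (Theorem 2, error-floor cases.) Assume μ1 = μ2 = 0, let ρ1 = rank(Σ1), ρ2 = rank(Σ2), ρ12 = rank(Σ1 + Σ2), assume ρ1 ≤ ρ2, and assume the rank relations r1 = min(M, ρ1), r2 = min(M, ρ2), r12 = min(M, ρ12) (which hold with probability 1 for a Gaussian measurement matrix Φ). If either (a) M ≤ ρ1, or (b) ρ12 ≤ M and ρ1 + ρ2 = 2·ρ12, then the Bhattacharyya upper bound P̄_err(σ²) converges, as σ² → 0 from the right, to a finite strictly positive limit; in particular it does not tend to 0. -/

import Mathlib

open Matrix MeasureTheory Filter Real Topology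

/-- Pseudo-determinant of a real square matrix: the product of the nonzero
eigenvalues when the matrix is Hermitian (symmetric), with the empty product
equal to 1; junk value 0 otherwise. -/
noncomputable def pdet {n : ℕ} (A : Matrix (Fin n) (Fin n) ℝ) : ℝ :=
  if h : A.IsHermitian then
    ∏ i ∈ Finset.univ.filter (fun i => h.eigenvalues i ≠ 0), h.eigenvalues i
  else 0

/-- Bhattacharyya exponent `K(σ²)` for the two-class compressive
classification problem, as a function of the noise level `s = σ²`. -/
noncomputable def Kb {M N : ℕ} (Φ : Matrix (Fin M) (Fin N) ℝ)
    (S1 S2 : Matrix (Fin N) (Fin N) ℝ) (μ1 μ2 : Fin N → ℝ) (s : ℝ) : ℝ :=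
  1/8 * ((Φ *ᵥ (μ1 - μ2)) ⬝ᵥ
      (((1/2 : ℝ) • (Φ * (S1 + S2) * Φᵀ + s • (1 : Matrix (Fin M) (Fin M) ℝ)))⁻¹
        *ᵥ (Φ *ᵥ (μ1 - μ2))))
  + 1/2 * Real.log
      (((1/2 : ℝ) • (Φ * (S1 + S2) * Φᵀ + s • (1 : Matrix (Fin M) (Fin M) ℝ))).det /
        Real.sqrt ((Φ * S1 * Φᵀ + s • (1 : Matrix (Fin M) (Fin M) ℝ)).det *
          (Φ * S2 * Φᵀ + s • (1 : Matrix (Fin M) (Fin M) ℝ)).det))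

/-- Bhattacharyya upper bound `P̄_err(σ²)` to the misclassification probability. -/
noncomputable def Perr {M N : ℕ} (Φ : Matrix (Fin M) (Fin N) ℝ)
    (S1 S2 : Matrix (Fin N) (Fin N) ℝ) (μ1 μ2 : Fin N → ℝ) (P1 P2 : ℝ) (s : ℝ) : ℝ :=
  Real.sqrt (P1 * P2) * Real.exp (-(Kb Φ S1 S2 μ1 μ2 s))

lemma det_add_smul_one' {M : ℕ} {A : Matrix (Fin M) (Fin M) ℝ} (hA : A.IsHermitian) (s : ℝ) :
    (A + s • (1 : Matrix (Fin M) (Fin M) ℝ)).det = ∏ i, (hA.eigenvalues i + s) := by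
  set U : Matrix (Fin M) (Fin M) ℝ := (hA.eigenvectorUnitary : Matrix (Fin M) (Fin M) ℝ)
  have hU : U * star U = 1 := (Matrix.mem_unitaryGroup_iff).mp (hA.eigenvectorUnitary).2
  have key : A + s • (1 : Matrix (Fin M) (Fin M) ℝ)
      = U * (Matrix.diagonal (fun i => hA.eigenvalues i + s)) * star U := by
    conv_lhs => rw [hA.spectral_theorem, Unitary.conjStarAlgAut_apply]
    have h1 : s • (1 : Matrix (Fin M) (Fin M) ℝ) = U * (s • 1) * star U := by
      rw [Matrix.mul_smul, Matrix.smul_mul, mul_one, hU]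
    rw [h1, ← Matrix.add_mul, ← Matrix.mul_add]
    congr 2
    rw [Matrix.smul_one_eq_diagonal, Matrix.diagonal_add]
    rfl
  have hdet1 : U.det * (star U).det = 1 := by rw [← Matrix.det_mul, hU, Matrix.det_one]
  rw [key, Matrix.det_mul, Matrix.det_mul]
  rw [mul_comm U.det _, mul_assoc, hdet1, mul_one, Matrix.det_diagonal]

lemma det_eq_pow_mul' {M : ℕ} {A : Matrix (Fin M) (Fin M) ℝ} (hA : A.PosSemidef) (s : ℝ) :
    (A + s • (1 : Matrix (Fin M) (Fin M) ℝ)).det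
      = s ^ (M - A.rank) *
        ∏ i ∈ Finset.univ.filter (fun i => hA.1.eigenvalues i ≠ 0), (hA.1.eigenvalues i + s) := by
  classical
  have hrank : A.rank = (Finset.univ.filter (fun i => hA.1.eigenvalues i ≠ 0)).card := by
    rw [hA.1.rank_eq_card_non_zero_eigs, Fintype.card_subtype]
  rw [det_add_smul_one' hA.1 s,
    ← Finset.prod_filter_mul_prod_filter_not Finset.univ (fun i => hA.1.eigenvalues i ≠ 0)]
  have hzero : ∀ i ∈ Finset.univ.filter (fun i => ¬ hA.1.eigenvalues i ≠ 0),
      hA.1.eigenvalues i + s = s := by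
    intro i hi
    have := (Finset.mem_filter.mp hi).2
    rw [not_not.mp this, zero_add]
  rw [Finset.prod_congr rfl hzero, Finset.prod_const]
  have hcard : (Finset.univ.filter (fun i => ¬ hA.1.eigenvalues i ≠ 0)).card = M - A.rank := by
    rw [Finset.filter_not, Finset.card_sdiff_of_subset (Finset.filter_subset _ _), Finset.card_univ,
      Fintype.card_fin, ← hrank]
  rw [hcard, mul_comm]

lemma psd_prod_pos {M : ℕ} {A : Matrix (Fin M) (Fin M) ℝ} (hA : A.PosSemidef) {s : ℝ}
    (hs : 0 ≤ s) :
    0 < ∏ i ∈ Finset.univ.filter (fun i => hA.1.eigenvalues i ≠ 0), (hA.1.eigenvalues i + s) := by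
  classical
  refine Finset.prod_pos fun i hi => ?_
  have h1 := hA.eigenvalues_nonneg i
  have h2 := (Finset.mem_filter.mp hi).2
  have : 0 < hA.1.eigenvalues i := lt_of_le_of_ne h1 (Ne.symm h2)
  linarith

lemma psd_rank_le_add {n : ℕ} {A B : Matrix (Fin n) (Fin n) ℝ} (hA : A.PosSemidef)
    (hB : B.PosSemidef) : A.rank ≤ (A + B).rank := by
  classical
  have hker : LinearMap.ker (A + B).mulVecLin ≤ LinearMap.ker A.mulVecLin := by
    intro x hx
    simp only [LinearMap.mem_ker, Matrix.mulVecLin_apply] at hx ⊢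
    have h0 : star x ⬝ᵥ (A + B) *ᵥ x = 0 := by rw [hx, dotProduct_zero]
    rw [Matrix.add_mulVec, dotProduct_add] at h0
    have hAx := hA.dotProduct_mulVec_nonneg x
    have hBx := hB.dotProduct_mulVec_nonneg x
    have : star x ⬝ᵥ A *ᵥ x = 0 := le_antisymm (by linarith) hAx
    exact (hA.dotProduct_mulVec_zero_iff x).mp this
  have h1 := LinearMap.finrank_range_add_finrank_ker A.mulVecLin
  have h2 := LinearMap.finrank_range_add_finrank_ker (A + B).mulVecLin
  have h3 : Module.finrank ℝ (LinearMap.ker (A + B).mulVecLin)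
      ≤ Module.finrank ℝ (LinearMap.ker A.mulVecLin) := Submodule.finrank_mono hker
  have hra : A.rank = Module.finrank ℝ (LinearMap.range A.mulVecLin) := rfl
  have hrb : (A + B).rank = Module.finrank ℝ (LinearMap.range (A + B).mulVecLin) := rfl
  omega

lemma aux_tendsto {M : ℕ} {A1 A2 A12 : Matrix (Fin M) (Fin M) ℝ}
    (h1 : A1.PosSemidef) (h2 : A2.PosSemidef) (h12 : A12.PosSemidef)
    (hr : A1.rank + A2.rank = 2 * A12.rank) {C : ℝ} (hC : 0 < C) :
    ∃ c : ℝ, 0 < c ∧ Filter.Tendsto (fun s : ℝ => C * Real.exp (-(1/2 * Real.log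
      (((1/2 : ℝ) • (A12 + s • (1 : Matrix (Fin M) (Fin M) ℝ))).det /
        Real.sqrt ((A1 + s • (1 : Matrix (Fin M) (Fin M) ℝ)).det *
          (A2 + s • (1 : Matrix (Fin M) (Fin M) ℝ)).det))))) (𝓝[>] (0:ℝ)) (𝓝 c) := by
  classical
  set f1 : ℝ → ℝ := fun s =>
    ∏ i ∈ Finset.univ.filter (fun i => h1.1.eigenvalues i ≠ 0), (h1.1.eigenvalues i + s) with hf1
  set f2 : ℝ → ℝ := fun s =>
    ∏ i ∈ Finset.univ.filter (fun i => h2.1.eigenvalues i ≠ 0), (h2.1.eigenvalues i + s) with hf2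
  set f12 : ℝ → ℝ := fun s =>
    ∏ i ∈ Finset.univ.filter (fun i => h12.1.eigenvalues i ≠ 0), (h12.1.eigenvalues i + s)
    with hf12
  set g : ℝ → ℝ := fun s => (1/2 : ℝ) ^ M * (f12 s / Real.sqrt (f1 s * f2 s)) with hg
  have hcont : ∀ (t : Finset (Fin M)) (e : Fin M → ℝ),
      Continuous (fun s : ℝ => ∏ i ∈ t, (e i + s)) :=
    fun t e => continuous_finset_prod t fun i _ => continuous_const.add continuous_id
  have hf1c : Continuous f1 := hcont _ _
  have hf2c : Continuous f2 := hcont _ _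
  have hf12c : Continuous f12 := hcont _ _
  have hp1 : 0 < f1 0 := psd_prod_pos h1 le_rfl
  have hp2 : 0 < f2 0 := psd_prod_pos h2 le_rfl
  have hp12 : 0 < f12 0 := psd_prod_pos h12 le_rfl
  have hsq0 : 0 < Real.sqrt (f1 0 * f2 0) := Real.sqrt_pos.mpr (mul_pos hp1 hp2)
  have hgc : ContinuousAt g 0 := by
    refine continuousAt_const.mul (ContinuousAt.div hf12c.continuousAt
      ((Real.continuous_sqrt.comp (hf1c.mul hf2c)).continuousAt) hsq0.ne')
  have hg0 : 0 < g 0 := by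
    refine mul_pos (pow_pos (by norm_num) M) (div_pos hp12 hsq0)
  refine ⟨C * Real.exp (-(1/2 * Real.log (g 0))), mul_pos hC (Real.exp_pos _), ?_⟩
  have hFc : ContinuousAt (fun x : ℝ => C * Real.exp (-(1/2 * Real.log x))) (g 0) := by
    refine continuousAt_const.mul (Real.continuous_exp.continuousAt.comp ?_)
    exact (continuousAt_const.mul (Real.continuousAt_log hg0.ne')).neg
  have htend : Filter.Tendsto (fun s : ℝ => C * Real.exp (-(1/2 * Real.log (g s))))
      (𝓝[>] (0:ℝ)) (𝓝 (C * Real.exp (-(1/2 * Real.log (g 0))))) :=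
    hFc.tendsto.comp (hgc.tendsto.mono_left nhdsWithin_le_nhds)
  refine Filter.Tendsto.congr' ?_ htend
  filter_upwards [self_mem_nhdsWithin] with s hs
  have hs' : (0:ℝ) < s := hs
  have hk1 : A1.rank ≤ M := by simpa using A1.rank_le_width
  have hk2 : A2.rank ≤ M := by simpa using A2.rank_le_width
  have hk12 : A12.rank ≤ M := by simpa using A12.rank_le_width
  have hkk : (M - A1.rank) + (M - A2.rank) = (M - A12.rank) * 2 := by omega
  have e12 : ((1/2 : ℝ) • (A12 + s • (1 : Matrix (Fin M) (Fin M) ℝ))).det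
      = (1/2 : ℝ) ^ M * (s ^ (M - A12.rank) * f12 s) := by
    rw [Matrix.det_smul, Fintype.card_fin, det_eq_pow_mul' h12]
  have e1 : (A1 + s • (1 : Matrix (Fin M) (Fin M) ℝ)).det
      = s ^ (M - A1.rank) * f1 s := det_eq_pow_mul' h1 s
  have e2 : (A2 + s • (1 : Matrix (Fin M) (Fin M) ℝ)).det
      = s ^ (M - A2.rank) * f2 s := det_eq_pow_mul' h2 s
  have hsq : (A1 + s • (1 : Matrix (Fin M) (Fin M) ℝ)).det *
      (A2 + s • (1 : Matrix (Fin M) (Fin M) ℝ)).det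
      = (s ^ (M - A12.rank)) ^ 2 * (f1 s * f2 s) := by
    rw [e1, e2, mul_mul_mul_comm, ← pow_add, hkk, pow_mul]
  have hsqrt : Real.sqrt ((A1 + s • (1 : Matrix (Fin M) (Fin M) ℝ)).det *
      (A2 + s • (1 : Matrix (Fin M) (Fin M) ℝ)).det)
      = s ^ (M - A12.rank) * Real.sqrt (f1 s * f2 s) := by
    rw [hsq, Real.sqrt_mul (sq_nonneg _), Real.sqrt_sq (pow_nonneg hs'.le _)]
  have hsqs : 0 < Real.sqrt (f1 s * f2 s) :=
    Real.sqrt_pos.mpr (mul_pos (psd_prod_pos h1 hs'.le) (psd_prod_pos h2 hs'.le))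
  have key : ((1/2 : ℝ) • (A12 + s • (1 : Matrix (Fin M) (Fin M) ℝ))).det /
      Real.sqrt ((A1 + s • (1 : Matrix (Fin M) (Fin M) ℝ)).det *
        (A2 + s • (1 : Matrix (Fin M) (Fin M) ℝ)).det) = g s := by
    rw [e12, hsqrt, hg]
    have hsne : s ^ (M - A12.rank) ≠ 0 := pow_ne_zero _ hs'.ne'
    field_simp
  rw [key]

/-- Theorem 2, error-floor cases: with zero-mean classes, `ρ1 ≤ ρ2`, and the
(almost surely valid) rank relations `r1 = min M ρ1`, `r2 = min M ρ2`,
`r12 = min M ρ12`, if either `M ≤ ρ1`, or `ρ12 ≤ M` and `ρ1 + ρ2 = 2 ρ12`,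
then the Bhattacharyya upper bound converges as `σ² → 0⁺` to a finite strictly
positive limit; in particular it does not tend to `0`. -/
theorem theorem2_error_floor (M N : ℕ) (hM : 0 < M) (hN : 0 < N)
    (Φ : Matrix (Fin M) (Fin N) ℝ) (S1 S2 : Matrix (Fin N) (Fin N) ℝ)
    (hS1 : S1.PosSemidef) (hS2 : S2.PosSemidef) (μ1 μ2 : Fin N → ℝ)
    (hμ1 : μ1 = 0) (hμ2 : μ2 = 0)
    (P1 P2 : ℝ) (hP1 : 0 < P1) (hP2 : 0 < P2) (hP : P1 + P2 = 1)
    (hρ : S1.rank ≤ S2.rank)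
    (hr1 : (Φ * S1 * Φᵀ).rank = min M S1.rank)
    (hr2 : (Φ * S2 * Φᵀ).rank = min M S2.rank)
    (hr12 : (Φ * (S1 + S2) * Φᵀ).rank = min M (S1 + S2).rank)
    (hcase : M ≤ S1.rank ∨ ((S1 + S2).rank ≤ M ∧ S1.rank + S2.rank = 2 * (S1 + S2).rank)) :
    ∃ c : ℝ, 0 < c ∧
      Filter.Tendsto (fun s : ℝ => Perr Φ S1 S2 μ1 μ2 P1 P2 s) (𝓝[>] 0) (𝓝 c) := by
  subst hμ1 hμ2
  have hPSD1 : (Φ * S1 * Φᵀ).PosSemidef := by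
    have := hS1.mul_mul_conjTranspose_same Φ
    rwa [Matrix.conjTranspose_eq_transpose_of_trivial] at this
  have hPSD2 : (Φ * S2 * Φᵀ).PosSemidef := by
    have := hS2.mul_mul_conjTranspose_same Φ
    rwa [Matrix.conjTranspose_eq_transpose_of_trivial] at this
  have hPSD12 : (Φ * (S1 + S2) * Φᵀ).PosSemidef := by
    have := (hS1.add hS2).mul_mul_conjTranspose_same Φ
    rwa [Matrix.conjTranspose_eq_transpose_of_trivial] at this
  have hρ1 : S1.rank ≤ (S1 + S2).rank := psd_rank_le_add hS1 hS2
  have hρ2 : S2.rank ≤ (S1 + S2).rank := by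
    have := psd_rank_le_add hS2 hS1
    rwa [add_comm] at this
  have hrr : (Φ * S1 * Φᵀ).rank + (Φ * S2 * Φᵀ).rank = 2 * (Φ * (S1 + S2) * Φᵀ).rank := by
    rcases hcase with hMle | ⟨h12M, hsum⟩
    · rw [hr1, hr2, hr12, min_eq_left hMle, min_eq_left (hMle.trans hρ),
        min_eq_left (hMle.trans (hρ.trans hρ2))]
      ring
    · rw [hr1, hr2, hr12, min_eq_right (hρ1.trans h12M), min_eq_right (hρ2.trans h12M),
        min_eq_right h12M, hsum]
  obtain ⟨c, hc, ht⟩ := aux_tendsto hPSD1 hPSD2 hPSD12 hrr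
    (C := Real.sqrt (P1 * P2)) (Real.sqrt_pos.mpr (mul_pos hP1 hP2))
  refine ⟨c, hc, ht.congr fun s => ?_⟩
  simp [Perr, Kb, Matrix.mulVec_zero]
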